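/- arXiv:1710.05737 — 10 statements merged into one kernel-verified Lean document; each statement's English description precedes it below -/
import Mathlib

section
/- Let p, q ≥ 2 be relatively prime integers and let c ∈ A_{pq}^ℤ be a configuration such that c(i) = 0 for all sufficiently small i. Then the series real_{pq}(G_{p,q}(c)) = ∑_{i∈ℤ} G_{p,q}(c)(−i)(pq)^i converges and equals p · real_{pq}(c). -/
/-- The local rule multiplying by `p` in base `pq`: writing `x = x₁q + x₀` with
`x₀ ∈ {0,…,q-1}`, `x₁ ∈ {0,…,p-1}`, we have `g p q x y = x₀p + y₁`. -/
def g (p q x y : ℕ) : ℕ := x % q * p + y / q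

/-- The cellular automaton `G_{p,q}` on configurations. -/
def Gca (p q : ℕ) (c : ℤ → ℕ) : ℤ → ℕ := fun i => g p q (c i) (c (i + 1))

lemma aux_summable (r : ℝ) (hr : 1 < r) (d : ℤ → ℕ) (B : ℕ) (hb : ∀ i, d i ≤ B)
    (N : ℤ) (h0 : ∀ i ≤ N, d i = 0) :
    Summable (fun i : ℤ => (d (-i) : ℝ) * r ^ i) := by
  have hr0 : 0 < r := lt_trans one_pos hr
  apply Summable.of_nat_of_neg
  · apply summable_of_ne_finset_zero (s := Finset.range (-N).toNat)
    intro n hn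
    have hn' : (-N).toNat ≤ n := by simpa using hn
    have : (-(n : ℤ)) ≤ N := by
      have := Int.self_le_toNat (-N)
      omega
    simp [h0 _ this]
  · have hgeom : Summable (fun n : ℕ => (B : ℝ) * r⁻¹ ^ n) := by
      apply Summable.mul_left
      exact summable_geometric_of_lt_one (by positivity) (by
        rw [inv_lt_one_iff₀]; right; exact hr)
    apply Summable.of_nonneg_of_le _ _ hgeom
    · intro n; positivity
    · intro n
      rw [zpow_neg, zpow_natCast, ← inv_pow]
      apply mul_le_mul_of_nonneg_right
      · exact_mod_cast hb _
      · positivity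

theorem stmt0 (p q : ℕ) (hp : 2 ≤ p) (hq : 2 ≤ q) (hpq : Nat.Coprime p q)
    (c : ℤ → ℕ) (hc : ∀ i, c i < p * q) (h0 : ∃ N : ℤ, ∀ i ≤ N, c i = 0) :
    HasSum (fun i : ℤ => (Gca p q c (-i) : ℝ) * ((p * q : ℕ) : ℝ) ^ i)
      ((p : ℝ) * ∑' i : ℤ, (c (-i) : ℝ) * ((p * q : ℕ) : ℝ) ^ i) := by
  obtain ⟨N, hN⟩ := h0
  set r : ℝ := ((p * q : ℕ) : ℝ) with hrdef
  have hq0 : 0 < q := by omega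
  have hr : 1 < r := by
    rw [hrdef]
    have : (1:ℕ) < p * q := by nlinarith
    exact_mod_cast this
  -- base series
  have hS : Summable (fun i : ℤ => (c (-i) : ℝ) * r ^ i) :=
    aux_summable r hr c (p * q) (fun i => (hc i).le) N hN
  set S : ℝ := ∑' i : ℤ, (c (-i) : ℝ) * r ^ i with hSdef
  have hSsum : HasSum (fun i : ℤ => (c (-i) : ℝ) * r ^ i) S := hS.hasSum
  -- pieces
  set f₁ : ℤ → ℝ := fun i => ((c (-i) % q : ℕ) : ℝ) * (p : ℝ) * r ^ i with hf₁
  set f₂' : ℤ → ℝ := fun i => ((c (-i) / q : ℕ) : ℝ) * r ^ (i + 1) with hf₂'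
  have h1 : Summable f₁ := by
    have := (aux_summable r hr (fun i => c i % q) q
      (fun i => (Nat.mod_lt _ hq0).le) N
      (fun i hi => by simp [hN i hi])).mul_right (p : ℝ)
    apply this.congr
    intro i; simp [hf₁]; ring
  have h2 : Summable f₂' := by
    have := (aux_summable r hr (fun i => c i / q) p
      (fun i => Nat.div_le_of_le_mul (by nlinarith [hc i])) N
      (fun i hi => by simp [hN i hi])).mul_right r
    apply this.congr
    intro i; simp [hf₂', zpow_add_one₀ (by positivity : r ≠ 0)]; ring
  have h1s := h1.hasSum
  have h2s := h2.hasSum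
  -- p • base = f₁ + f₂'
  have key : ∀ i : ℤ, f₁ i + f₂' i = (p : ℝ) * ((c (-i) : ℝ) * r ^ i) := by
    intro i
    have hdm : (q : ℝ) * ((c (-i) / q : ℕ) : ℝ) + ((c (-i) % q : ℕ) : ℝ) = (c (-i) : ℝ) := by
      exact_mod_cast congrArg (Nat.cast : ℕ → ℝ) (Nat.div_add_mod (c (-i)) q)
    simp only [hf₁, hf₂', zpow_add_one₀ (by positivity : r ≠ 0), hrdef]
    rw [zpow_add_one₀ (by rw [← hrdef]; exact ne_of_gt (by linarith) : ((p * q : ℕ) : ℝ) ≠ 0)]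
    push_cast [← hdm]
    ring
  have hsum_eq : (∑' i, f₁ i) + (∑' i, f₂' i) = (p : ℝ) * S := by
    have hA : HasSum (fun i => f₁ i + f₂' i) ((∑' i, f₁ i) + (∑' i, f₂' i)) :=
      h1s.add h2s
    have hB : HasSum (fun i => f₁ i + f₂' i) ((p : ℝ) * S) := by
      have := hSsum.mul_left (p : ℝ)
      exact this.congr_fun key
    exact hA.unique hB
  -- reindex f₂'
  have h2shift : HasSum (fun i : ℤ => ((c (1 - i) / q : ℕ) : ℝ) * r ^ i) (∑' i, f₂' i) := by
    have h := ((Equiv.addRight (-1 : ℤ)).hasSum_iff (f := f₂')).mpr h2s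
    apply h.congr_fun
    intro i
    simp only [Function.comp, Equiv.coe_addRight, hf₂']
    have e1 : -(i + -1) = 1 - i := by ring
    have e2 : i + -1 + 1 = i := by ring
    rw [e1, e2]
  -- combine
  have final : HasSum (fun i : ℤ => f₁ i + ((c (1 - i) / q : ℕ) : ℝ) * r ^ i)
      ((∑' i, f₁ i) + (∑' i, f₂' i)) := h1s.add h2shift
  rw [← hsum_eq]
  apply final.congr_fun
  intro i
  simp only [Gca, g, hf₁]
  have : -i + 1 = 1 - i := by ring
  rw [this]
  push_cast
  ring
end

section
/- Let p, q ≥ 2 be relatively prime integers and x, y, z, w, a ∈ A_{pq}. If f_{p,q}(x,a,y) = f_{p,q}(z,a,w), then x ≡ z (mod q). -/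
/-- The local rule of `F_{p,q}`. -/
def f (p q x y z : ℕ) : ℕ := g p q (g p q x y) (g p q y z)

theorem stmt3 (p q : ℕ) (hp : 2 ≤ p) (hq : 2 ≤ q) (hpq : Nat.Coprime p q)
    (x y z w a : ℕ) (hx : x < p * q) (hy : y < p * q) (hz : z < p * q)
    (hw : w < p * q) (ha : a < p * q)
    (h : f p q x a y = f p q z a w) : x % q = z % q := by
  have hp0 : 0 < p := by omega
  have hq0 : 0 < q := by omega
  unfold f g at h
  set A1 := (x % q * p + a / q) % q with hA1def
  set A2 := (z % q * p + a / q) % q with hA2def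
  have hB1 : (a % q * p + y / q) / q < p := by
    apply (Nat.div_lt_iff_lt_mul hq0).2
    have h1 : a % q < q := Nat.mod_lt _ hq0
    have h2 : y / q < p := (Nat.div_lt_iff_lt_mul hq0).2 hy
    nlinarith
  have hB2 : (a % q * p + w / q) / q < p := by
    apply (Nat.div_lt_iff_lt_mul hq0).2
    have h1 : a % q < q := Nat.mod_lt _ hq0
    have h2 : w / q < p := (Nat.div_lt_iff_lt_mul hq0).2 hw
    nlinarith
  have hA : A1 = A2 := by
    have hdiv := congrArg (· / p) h
    simp only [mul_comm A1 p, mul_comm A2 p] at hdiv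
    simpa [Nat.mul_add_div hp0, Nat.div_eq_of_lt hB1, Nat.div_eq_of_lt hB2] using hdiv
  have hmod : x % q * p ≡ z % q * p [MOD q] := by
    have : x % q * p + a / q ≡ z % q * p + a / q [MOD q] := by
      unfold Nat.ModEq
      rwa [hA1def, hA2def] at hA
    exact this.add_right_cancel' _
  have := hmod.cancel_right_of_coprime hpq.symm
  simpa [Nat.ModEq, Nat.mod_mod_of_dvd] using this
end

section
/- Let p, q ≥ 2 be relatively prime integers. Then F_{p,q} ∘ F_{q,p} is the identity map on A_{pq}^ℤ; in particular F_{p,q} : A_{pq}^ℤ → A_{pq}^ℤ is a bijection with inverse F_{q,p}. -/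
/-- The cellular automaton `F_{p,q} = σ⁻¹ ∘ G_{p,q} ∘ G_{p,q}`, where `σ` is the left
shift `σ(c)(i) = c(i+1)` (so `σ⁻¹(e)(i) = e(i-1)`). -/
def Fca (p q : ℕ) (c : ℤ → ℕ) : ℤ → ℕ := fun i => Gca p q (Gca p q c) (i - 1)

lemma myModAdd (q a b : ℕ) (hb : b < q) : (a * q + b) % q = b := by
  rw [add_comm, Nat.add_mul_mod_self_right, Nat.mod_eq_of_lt hb]

lemma myDivAdd (q a b : ℕ) (hq : 0 < q) (hb : b < q) : (a * q + b) / q = a := by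
  rw [add_comm, Nat.add_mul_div_right _ _ hq, Nat.div_eq_of_lt hb, zero_add]

lemma gBound (p q x y : ℕ) (hq : 0 < q) (hy : y < q * p) : g p q x y < p * q := by
  have h1 : x % q < q := Nat.mod_lt _ hq
  have h2 : y / q < p := Nat.div_lt_of_lt_mul hy
  calc g p q x y = x % q * p + y / q := rfl
    _ < (x % q + 1) * p := by rw [add_mul, one_mul]; omega
    _ ≤ q * p := Nat.mul_le_mul_right p h1
    _ = p * q := mul_comm q p

lemma GcaBound (p q : ℕ) (hq : 0 < q) (c : ℤ → ℕ) (hc : ∀ i, c i < p * q) :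
    ∀ i, Gca p q c i < p * q :=
  fun i => gBound p q _ _ hq (by rw [mul_comm]; exact hc (i + 1))

lemma FcaBound (p q : ℕ) (hq : 0 < q) (c : ℤ → ℕ) (hc : ∀ i, c i < p * q) :
    ∀ i, Fca p q c i < p * q :=
  fun i => GcaBound p q hq _ (GcaBound p q hq c hc) (i - 1)

lemma FF (p q : ℕ) (hp : 0 < p) (hq : 0 < q) (c : ℤ → ℕ) (hc : ∀ i, c i < p * q) :
    Fca p q (Fca q p c) = c := by
  set A : ℤ → ℕ := Gca q p c with hA
  have hAB : ∀ i, A i < q * p := GcaBound q p hp c (by intro i; rw [mul_comm]; exact hc i)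
  have hdiv : ∀ i : ℤ, c i / p < q := fun i => Nat.div_lt_of_lt_mul (hc i)
  have hAdiv : ∀ i : ℤ, A i / p < q := fun i => Nat.div_lt_of_lt_mul (by rw [mul_comm]; exact hAB i)
  have hF : ∀ i : ℤ, Fca q p c i = A (i - 1) % p * q + A i / p := by
    intro i
    show g q p (A (i - 1)) (A (i - 1 + 1)) = _
    rw [sub_add_cancel]; rfl
  have key : ∀ i : ℤ, Gca p q (Fca q p c) i = A i := by
    intro i
    show g p q (Fca q p c i) (Fca q p c (i + 1)) = A i
    rw [hF i, hF (i + 1), add_sub_cancel_right]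
    unfold g
    rw [myModAdd q _ _ (hAdiv i), myDivAdd q _ _ hq (hAdiv (i + 1)),
      Nat.div_add_mod']
  funext i
  show g p q (Gca p q (Fca q p c) (i - 1)) (Gca p q (Fca q p c) (i - 1 + 1)) = c i
  rw [sub_add_cancel, key, key]
  show A (i - 1) % q * p + A i / q = c i
  have h1 : A (i - 1) = c (i - 1) % p * q + c (i - 1 + 1) / p := rfl
  have h2 : A i = c i % p * q + c (i + 1) / p := rfl
  rw [h1, h2, sub_add_cancel, myModAdd q _ _ (hdiv i), myDivAdd q _ _ hq (hdiv (i + 1)),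
    Nat.div_add_mod']

theorem stmt4 (p q : ℕ) (hp : 2 ≤ p) (hq : 2 ≤ q) (hpq : Nat.Coprime p q) :
    (∀ c ∈ {c : ℤ → ℕ | ∀ i, c i < p * q}, Fca p q (Fca q p c) = c) ∧
    Set.InvOn (Fca q p) (Fca p q)
      {c : ℤ → ℕ | ∀ i, c i < p * q} {c : ℤ → ℕ | ∀ i, c i < p * q} ∧
    Set.BijOn (Fca p q)
      {c : ℤ → ℕ | ∀ i, c i < p * q} {c : ℤ → ℕ | ∀ i, c i < p * q} := by
  have hp0 : 0 < p := by omega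
  have hq0 : 0 < q := by omega
  have h1 : ∀ c ∈ {c : ℤ → ℕ | ∀ i, c i < p * q}, Fca p q (Fca q p c) = c :=
    fun c hc => FF p q hp0 hq0 c hc
  have h2 : ∀ c ∈ {c : ℤ → ℕ | ∀ i, c i < p * q}, Fca q p (Fca p q c) = c := by
    intro c hc
    exact FF q p hq0 hp0 c (by intro i; rw [mul_comm]; exact hc i)
  have m1 : Set.MapsTo (Fca p q) {c : ℤ → ℕ | ∀ i, c i < p * q}
      {c : ℤ → ℕ | ∀ i, c i < p * q} := fun c hc => FcaBound p q hq0 c hc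
  have m2 : Set.MapsTo (Fca q p) {c : ℤ → ℕ | ∀ i, c i < p * q}
      {c : ℤ → ℕ | ∀ i, c i < p * q} := by
    intro c hc i
    rw [mul_comm]
    exact FcaBound q p hp0 c (fun j => by rw [mul_comm]; exact hc j) i
  have hinv : Set.InvOn (Fca q p) (Fca p q) {c : ℤ → ℕ | ∀ i, c i < p * q}
      {c : ℤ → ℕ | ∀ i, c i < p * q} := ⟨h2, h1⟩
  exact ⟨h1, hinv, hinv.bijOn m1 m2⟩
end

section
/- Let p, q ≥ 2 be relatively prime integers and c, c' ∈ A_{pq}^ℤ. If for some i ∈ ℤ we have F_{p,q}^{-1}(c)(i+1) = F_{p,q}^{-1}(c')(i+1), c(i+1) = c'(i+1), and F_{p,q}(c)(i+1) = F_{p,q}(c')(i+1), then c(i) = c'(i). Consequently, for every k ∈ ℤ, the value F_{p,q}^k(c)(i) is uniquely determined by the three values F_{p,q}^{k−1}(c)(i+1), F_{p,q}^k(c)(i+1), and F_{p,q}^{k+1}(c)(i+1). -/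
/-- Integer iterates of `F_{p,q}`: for `k ≥ 0` iterate `F_{p,q}`, for `k < 0` iterate
the inverse `F_{q,p}`. -/
def Fiter (p q : ℕ) (k : ℤ) (c : ℤ → ℕ) : ℤ → ℕ :=
  if 0 ≤ k then (Fca p q)^[k.toNat] c else (Fca q p)^[(-k).toNat] c

section aux
variable {p q : ℕ}

lemma g_lt (hq : 0 < q) {x y : ℕ} (hy : y < p * q) : g p q x y < p * q := by
  have h1 : x % q < q := Nat.mod_lt _ hq
  have h2 : y / q < p := Nat.div_lt_of_lt_mul (by rw [mul_comm]; exact hy)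
  calc x % q * p + y / q < x % q * p + p := by omega
    _ = (x % q + 1) * p := by ring
    _ ≤ q * p := Nat.mul_le_mul_right _ (by omega)
    _ = p * q := mul_comm _ _

lemma gg (hp : 0 < p) (hq : 0 < q) {x y z : ℕ} (hy : y < p * q) (hz : z < p * q) :
    g q p (g p q x y) (g p q y z) = y := by
  have h1 : y / q < p := Nat.div_lt_of_lt_mul (by rw [mul_comm]; exact hy)
  have h2 : z / q < p := Nat.div_lt_of_lt_mul (by rw [mul_comm]; exact hz)
  show (x % q * p + y / q) % p * q + (y % q * p + z / q) / p = y
  rw [show x % q * p + y / q = p * (x % q) + y / q from by ring, Nat.mul_add_mod,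
    Nat.mod_eq_of_lt h1,
    show y % q * p + z / q = p * (y % q) + z / q from by ring, Nat.mul_add_div hp,
    Nat.div_eq_of_lt h2, Nat.add_zero, Nat.div_add_mod']

lemma Gca_lt (hq : 0 < q) {c : ℤ → ℕ} (hc : ∀ i, c i < p * q) (i : ℤ) :
    Gca p q c i < p * q := g_lt hq (hc _)

lemma Fca_lt (hq : 0 < q) {c : ℤ → ℕ} (hc : ∀ i, c i < p * q) (i : ℤ) :
    Fca p q c i < p * q := Gca_lt hq (Gca_lt hq hc) (i - 1)

lemma GG (hp : 0 < p) (hq : 0 < q) {c : ℤ → ℕ} (hc : ∀ i, c i < p * q) (j : ℤ) :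
    Gca q p (Gca p q c) j = c (j + 1) := gg hp hq (hc _) (hc _)

lemma FF_inv (hp : 0 < p) (hq : 0 < q) {c : ℤ → ℕ} (hc : ∀ i, c i < p * q) (i : ℤ) :
    Fca q p (Fca p q c) i = c i := by
  have hG : ∀ i, Gca p q c i < p * q := Gca_lt hq hc
  have key : Gca q p (Fca p q c) = Gca p q c := by
    funext j
    have e2 : Fca p q c (j + 1) = Gca p q (Gca p q c) (j - 1 + 1) := by
      show Gca p q (Gca p q c) (j + 1 - 1) = _
      congr 1; ring
    show g q p (Fca p q c j) (Fca p q c (j + 1)) = Gca p q c j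
    rw [show Fca p q c j = Gca p q (Gca p q c) (j - 1) from rfl, e2]
    exact (GG hp hq hG (j - 1)).trans (by congr 1; ring)
  show Gca q p (Gca q p (Fca p q c)) (i - 1) = c i
  rw [key, GG hp hq hc]
  congr 1; ring

lemma FF_inv' (hp : 0 < p) (hq : 0 < q) {c : ℤ → ℕ} (hc : ∀ i, c i < p * q) (i : ℤ) :
    Fca p q (Fca q p c) i = c i :=
  FF_inv hq hp (fun j => by rw [mul_comm]; exact hc j) i

lemma unique_digit (hp : 0 < p) {a a' b b' : ℕ} (hb : b < p) (hb' : b' < p)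
    (h : a * p + b = a' * p + b') : a = a' := by
  have h1 : (a * p + b) / p = a := by
    rw [show a * p + b = p * a + b from by ring, Nat.mul_add_div hp, Nat.div_eq_of_lt hb, Nat.add_zero]
  have h2 : (a' * p + b') / p = a' := by
    rw [show a' * p + b' = p * a' + b' from by ring, Nat.mul_add_div hp, Nat.div_eq_of_lt hb', Nat.add_zero]
  rw [← h1, ← h2, h]

lemma mod_determined (hp : 0 < p) (hq : 0 < q) (hpq : Nat.Coprime p q) {x x' y z z' : ℕ}
    (hz : z < p * q) (hz' : z' < p * q)
    (h : g p q (g p q x y) (g p q y z) = g p q (g p q x' y) (g p q y z')) :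
    x % q = x' % q := by
  have h2 : g p q y z / q < p := Nat.div_lt_of_lt_mul (by rw [mul_comm]; exact g_lt hq hz)
  have h2' : g p q y z' / q < p := Nat.div_lt_of_lt_mul (by rw [mul_comm]; exact g_lt hq hz')
  have key : g p q x y % q = g p q x' y % q := unique_digit hp h2 h2' h
  have key2 : (x % q * p + y / q) % q = (x' % q * p + y / q) % q := key
  have m1 : x % q * p ≡ x' % q * p [MOD q] := by
    have h3 : (x % q * p + y / q) ≡ (x' % q * p + y / q) [MOD q] := key2
    exact Nat.ModEq.add_right_cancel' _ h3
  have m2 : x % q ≡ x' % q [MOD q] := m1.cancel_right_of_coprime hpq.symm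
  have := m2
  unfold Nat.ModEq at this
  rwa [Nat.mod_mod_of_dvd x dvd_rfl, Nat.mod_mod_of_dvd x' dvd_rfl] at this

lemma step (hp : 2 ≤ p) (hq : 2 ≤ q) (hpq : Nat.Coprime p q) {c c' : ℤ → ℕ}
    (hc : ∀ i, c i < p * q) (hc' : ∀ i, c' i < p * q) (i : ℤ)
    (hA : Fca q p c (i + 1) = Fca q p c' (i + 1)) (hB : c (i + 1) = c' (i + 1))
    (hC : Fca p q c (i + 1) = Fca p q c' (i + 1)) : c i = c' i := by
  have hp0 : 0 < p := by omega
  have hq0 : 0 < q := by omega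
  have eC : ∀ d : ℤ → ℕ,
      Fca p q d (i + 1) = g p q (g p q (d i) (d (i + 1))) (g p q (d (i + 1)) (d (i + 2))) := by
    intro d
    show Gca p q (Gca p q d) (i + 1 - 1) = _
    rw [show i + 1 - 1 = i from by ring]
    show g p q (g p q (d i) (d (i + 1))) (g p q (d (i + 1)) (d (i + 1 + 1))) = _
    rw [show i + 1 + 1 = i + 2 from by ring]
  have eA : ∀ d : ℤ → ℕ,
      Fca q p d (i + 1) = g q p (g q p (d i) (d (i + 1))) (g q p (d (i + 1)) (d (i + 2))) := by
    intro d
    show Gca q p (Gca q p d) (i + 1 - 1) = _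
    rw [show i + 1 - 1 = i from by ring]
    show g q p (g q p (d i) (d (i + 1))) (g q p (d (i + 1)) (d (i + 1 + 1))) = _
    rw [show i + 1 + 1 = i + 2 from by ring]
  rw [eC c, eC c', hB] at hC
  rw [eA c, eA c', hB] at hA
  have mq : c i % q = c' i % q := mod_determined hp0 hq0 hpq (hc _) (hc' _) hC
  have mp : c i % p = c' i % p := by
    refine mod_determined hq0 hp0 hpq.symm ?_ ?_ hA
    · rw [mul_comm]; exact hc _
    · rw [mul_comm]; exact hc' _
  have hmul : c i ≡ c' i [MOD p * q] :=
    (Nat.modEq_and_modEq_iff_modEq_mul hpq).mp ⟨mp, mq⟩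
  unfold Nat.ModEq at hmul
  rwa [Nat.mod_eq_of_lt (hc i), Nat.mod_eq_of_lt (hc' i)] at hmul

lemma iter_lt (hq : 0 < q) {c : ℤ → ℕ} (hc : ∀ i, c i < p * q) (n : ℕ) :
    ∀ i, (Fca p q)^[n] c i < p * q := by
  induction n with
  | zero => simpa using hc
  | succ n ih =>
    intro i
    rw [Function.iterate_succ_apply']
    exact Fca_lt hq ih i

lemma Fiter_lt (hp0 : 0 < p) (hq0 : 0 < q) {c : ℤ → ℕ} (hc : ∀ i, c i < p * q) (k : ℤ) :
    ∀ i, Fiter p q k c i < p * q := by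
  unfold Fiter
  split
  · exact iter_lt hq0 hc _
  · intro i
    have h := iter_lt (p := q) (q := p) hp0 (fun j => by rw [mul_comm]; exact hc j) (-k).toNat i
    rwa [mul_comm q p] at h

lemma Fiter_succ (hp0 : 0 < p) (hq0 : 0 < q) {c : ℤ → ℕ} (hc : ∀ i, c i < p * q) (k : ℤ) :
    Fiter p q (k + 1) c = Fca p q (Fiter p q k c) := by
  unfold Fiter
  rcases le_or_gt 0 k with h | h
  · rw [if_pos (show (0:ℤ) ≤ k + 1 from by omega), if_pos h, show (k + 1).toNat = k.toNat + 1 from by omega,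
      Function.iterate_succ_apply']
  · rw [if_neg (not_le.mpr h)]
    rcases eq_or_lt_of_le (show k ≤ -1 from by omega) with h1 | h1
    · rw [if_pos (show (0:ℤ) ≤ k + 1 from by omega), show (k + 1).toNat = 0 from by omega,
        show (-k).toNat = 1 from by omega]
      simp only [Function.iterate_zero, Function.iterate_one, id]
      funext j
      exact (FF_inv' hp0 hq0 hc j).symm
    · rw [if_neg (show ¬ (0:ℤ) ≤ k + 1 from by omega),
        show (-k).toNat = (-(k + 1)).toNat + 1 from by omega,
        Function.iterate_succ_apply']
      have hb : ∀ j, (Fca q p)^[(-(k + 1)).toNat] c j < p * q := by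
        intro j
        have h2 := iter_lt (p := q) (q := p) hp0 (fun j => by rw [mul_comm]; exact hc j)
          (-(k + 1)).toNat j
        rwa [mul_comm q p] at h2
      funext j
      exact (FF_inv' hp0 hq0 hb j).symm

lemma Fiter_pred (hp0 : 0 < p) (hq0 : 0 < q) {c : ℤ → ℕ} (hc : ∀ i, c i < p * q) (k : ℤ) :
    Fiter p q (k - 1) c = Fca q p (Fiter p q k c) := by
  have h := Fiter_succ hp0 hq0 hc (k - 1)
  rw [show k - 1 + 1 = k from by ring] at h
  rw [h]
  funext j
  exact (FF_inv hp0 hq0 (Fiter_lt hp0 hq0 hc (k - 1)) j).symm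

end aux

theorem stmt5 (p q : ℕ) (hp : 2 ≤ p) (hq : 2 ≤ q) (hpq : Nat.Coprime p q)
    (c c' : ℤ → ℕ) (hc : ∀ i, c i < p * q) (hc' : ∀ i, c' i < p * q) (i : ℤ) :
    (Fca q p c (i + 1) = Fca q p c' (i + 1) → c (i + 1) = c' (i + 1) →
      Fca p q c (i + 1) = Fca p q c' (i + 1) → c i = c' i) ∧
    (∀ k : ℤ, Fiter p q (k - 1) c (i + 1) = Fiter p q (k - 1) c' (i + 1) →
      Fiter p q k c (i + 1) = Fiter p q k c' (i + 1) →
      Fiter p q (k + 1) c (i + 1) = Fiter p q (k + 1) c' (i + 1) →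
      Fiter p q k c i = Fiter p q k c' i) := by
  have hp0 : 0 < p := by omega
  have hq0 : 0 < q := by omega
  constructor
  · exact step hp hq hpq hc hc' i
  · intro k h1 h2 h3
    rw [Fiter_pred hp0 hq0 hc k, Fiter_pred hp0 hq0 hc' k] at h1
    rw [Fiter_succ hp0 hq0 hc k, Fiter_succ hp0 hq0 hc' k] at h3
    exact step hp hq hpq (Fiter_lt hp0 hq0 hc k) (Fiter_lt hp0 hq0 hc' k) i h1 h2 h3
end

section
/- Let p, q ≥ 2 be relatively prime integers, let c, c' ∈ A_{pq}^ℤ, and let k > 0. If F_{p,q}^n(c)(k) = F_{p,q}^n(c')(k) for every integer n with −(k−1) ≤ n ≤ k−1, then c(j) = c'(j) for every j with 1 ≤ j ≤ k. In other words, the values of the k-trace tr_{p,q}(c,k)(n) = F_{p,q}^n(c)(k) for −(k−1) ≤ n ≤ k−1 uniquely determine c(1), ..., c(k). -/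
namespace Stmt6Aux

lemma Gca_lt {p q : ℕ} (hp : 0 < p) (hq : 0 < q) {c : ℤ → ℕ}
    (hc : ∀ i, c i < p * q) (i : ℤ) : Gca p q c i < p * q := by
  have h1 : c i % q < q := Nat.mod_lt _ hq
  have h2 : c (i + 1) / q < p := (Nat.div_lt_iff_lt_mul hq).2 (hc _)
  show c i % q * p + c (i + 1) / q < p * q
  nlinarith

lemma Fca_lt {p q : ℕ} (hp : 0 < p) (hq : 0 < q) {c : ℤ → ℕ}
    (hc : ∀ i, c i < p * q) (i : ℤ) : Fca p q c i < p * q :=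
  Gca_lt hp hq (Gca_lt hp hq hc) _

lemma Gca_eq' {p q : ℕ} (c : ℤ → ℕ) (i : ℤ) :
    Gca p q c (i - 1) = c (i - 1) % q * p + c i / q := by
  show g p q (c (i - 1)) (c (i - 1 + 1)) = _
  rw [sub_add_cancel]
  rfl

lemma Fca_eq {p q : ℕ} (c : ℤ → ℕ) (i : ℤ) :
    Fca p q c i = Gca p q c (i - 1) % q * p + Gca p q c i / q := by
  show g p q (Gca p q c (i - 1)) (Gca p q c (i - 1 + 1)) = _
  rw [sub_add_cancel]
  rfl

lemma div_p_of {p a t : ℕ} (hp : 0 < p) (ht : t < p) :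
    (a * p + t) / p = a := by
  rw [add_comm, Nat.add_mul_div_right _ _ hp, Nat.div_eq_of_lt ht, zero_add]

lemma mod_p_of {p a t : ℕ} (ht : t < p) : (a * p + t) % p = t := by
  rw [mul_comm, Nat.mul_add_mod, Nat.mod_eq_of_lt ht]

/-- recovery: `g q p` applied to consecutive `Gca p q` values recovers the cell. -/
lemma recov {p q : ℕ} (hp : 0 < p) (hq : 0 < q) {c : ℤ → ℕ}
    (hc : ∀ i, c i < p * q) (i : ℤ) :
    g q p (Gca p q c (i - 1)) (Gca p q c i) = c i := by
  have h1 : c i / q < p := (Nat.div_lt_iff_lt_mul hq).2 (hc i)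
  have h2 : c (i + 1) / q < p := (Nat.div_lt_iff_lt_mul hq).2 (hc _)
  show Gca p q c (i - 1) % p * q + Gca p q c i / p = c i
  have e1 : Gca p q c (i - 1) % p = c i / q := by
    rw [Gca_eq', mod_p_of h1]
  have e2 : Gca p q c i / p = c i % q := by
    show g p q (c i) (c (i + 1)) / p = _
    show (c i % q * p + c (i + 1) / q) / p = _
    rw [div_p_of hp h2]
  rw [e1, e2, mul_comm]
  exact Nat.div_add_mod (c i) q

lemma inv_comp {p q : ℕ} (hp : 0 < p) (hq : 0 < q) {c : ℤ → ℕ}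
    (hc : ∀ i, c i < p * q) : Fca q p (Fca p q c) = c := by
  funext i
  have hb1 : ∀ j, Gca p q c j < p * q := Gca_lt hp hq hc
  have inner : Gca q p (Fca p q c) = Gca p q c := by
    funext j
    show g q p (Fca p q c j) (Fca p q c (j + 1)) = _
    have h1 : Fca p q c j = Gca p q (Gca p q c) (j - 1) := rfl
    have h2 : Fca p q c (j + 1) = Gca p q (Gca p q c) j := by
      show Gca p q (Gca p q c) (j + 1 - 1) = _
      norm_num
    rw [h1, h2]
    exact recov hp hq hb1 j
  show Gca q p (Gca q p (Fca p q c)) (i - 1) = c i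
  rw [inner]
  show g q p (Gca p q c (i - 1)) (Gca p q c (i - 1 + 1)) = c i
  rw [sub_add_cancel]
  exact recov hp hq hc i

lemma inv_comp' {p q : ℕ} (hp : 0 < p) (hq : 0 < q) {c : ℤ → ℕ}
    (hc : ∀ i, c i < p * q) : Fca p q (Fca q p c) = c :=
  inv_comp hq hp (fun i => by rw [mul_comm]; exact hc i)

lemma iter_bound {p q : ℕ} (hp : 0 < p) (hq : 0 < q) {c : ℤ → ℕ}
    (hc : ∀ i, c i < p * q) : ∀ m, ∀ i, (Fca p q)^[m] c i < p * q := by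
  intro m
  induction m with
  | zero => exact hc
  | succ m ih =>
    intro i
    rw [Function.iterate_succ_apply']
    exact Fca_lt hp hq ih i

lemma iter_bound' {p q : ℕ} (hp : 0 < p) (hq : 0 < q) {c : ℤ → ℕ}
    (hc : ∀ i, c i < p * q) : ∀ m, ∀ i, (Fca q p)^[m] c i < p * q := by
  intro m i
  have := iter_bound hq hp (c := c) (fun i => by rw [mul_comm]; exact hc i) m i
  rw [mul_comm]
  exact this

lemma Fiter_bound {p q : ℕ} (hp : 0 < p) (hq : 0 < q) {c : ℤ → ℕ}
    (hc : ∀ i, c i < p * q) (n : ℤ) : ∀ i, Fiter p q n c i < p * q := by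
  unfold Fiter
  split
  · exact iter_bound hp hq hc _
  · exact iter_bound' hp hq hc _

lemma Fiter_step {p q : ℕ} (hp : 0 < p) (hq : 0 < q) {c : ℤ → ℕ}
    (hc : ∀ i, c i < p * q) (n : ℤ) :
    Fiter p q (n + 1) c = Fca p q (Fiter p q n c) := by
  by_cases h : 0 ≤ n
  · simp only [Fiter, if_pos h, if_pos (by omega : (0:ℤ) ≤ n + 1)]
    have h2 : (n + 1).toNat = n.toNat + 1 := by omega
    rw [h2, Function.iterate_succ_apply']
  · simp only [Fiter, if_neg h]
    by_cases h2 : 0 ≤ n + 1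
    · rw [if_pos h2]
      have hn : n = -1 := by omega
      subst hn
      norm_num
      exact (inv_comp' hp hq hc).symm
    · rw [if_neg h2]
      have h3 : (-n).toNat = (-(n + 1)).toNat + 1 := by omega
      rw [h3, Function.iterate_succ_apply']
      exact (inv_comp' hp hq (fun i => iter_bound' hp hq hc _ i)).symm

/-- relation 1: `Gca` value at `i-1` determines `d (i-1) % q`. -/
lemma rel1 {p q : ℕ} (hp : 0 < p) (hq : 0 < q) {d : ℤ → ℕ}
    (hd : ∀ i, d i < p * q) (i : ℤ) :
    Gca p q d (i - 1) / p = d (i - 1) % q := by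
  rw [Gca_eq']
  exact div_p_of hp ((Nat.div_lt_iff_lt_mul hq).2 (hd i))

/-- relation 2: `Gca` value at `i-1` determines `d i / q`. -/
lemma rel2 {p q : ℕ} (hp : 0 < p) (hq : 0 < q) {d : ℤ → ℕ}
    (hd : ∀ i, d i < p * q) (i : ℤ) :
    Gca p q d (i - 1) % p = d i / q := by
  rw [Gca_eq']
  exact mod_p_of ((Nat.div_lt_iff_lt_mul hq).2 (hd i))

/-- relation 3: `Fca` value at `i` determines `Gca d (i-1) % q`. -/
lemma rel3 {p q : ℕ} (hp : 0 < p) (hq : 0 < q) {d : ℤ → ℕ}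
    (hd : ∀ i, d i < p * q) (i : ℤ) :
    Fca p q d i / p = Gca p q d (i - 1) % q := by
  rw [Fca_eq]
  exact div_p_of hp ((Nat.div_lt_iff_lt_mul hq).2 (Gca_lt hp hq hd i))

/-- relation 4: `Fca` value at `i` determines `Gca d i / q`. -/
lemma rel4 {p q : ℕ} (hp : 0 < p) (hq : 0 < q) {d : ℤ → ℕ}
    (hd : ∀ i, d i < p * q) (i : ℤ) :
    Fca p q d i % p = Gca p q d i / q := by
  rw [Fca_eq]
  exact mod_p_of ((Nat.div_lt_iff_lt_mul hq).2 (Gca_lt hp hq hd i))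

lemma crt {p q x y : ℕ} (hpq : Nat.Coprime p q) (hx : x < p * q) (hy : y < p * q)
    (h1 : x % p = y % p) (h2 : x % q = y % q) : x = y := by
  have h : x ≡ y [MOD p * q] := (Nat.modEq_and_modEq_iff_modEq_mul hpq).1 ⟨h1, h2⟩
  have h' : x % (p * q) = y % (p * q) := h
  rwa [Nat.mod_eq_of_lt hx, Nat.mod_eq_of_lt hy] at h'

end Stmt6Aux

open Stmt6Aux in
theorem stmt6 (p q : ℕ) (hp : 2 ≤ p) (hq : 2 ≤ q) (hpq : Nat.Coprime p q)
    (c c' : ℤ → ℕ) (hc : ∀ i, c i < p * q) (hc' : ∀ i, c' i < p * q)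
    (k : ℕ) (hk : 0 < k)
    (htr : ∀ n : ℤ, -((k : ℤ) - 1) ≤ n → n ≤ (k : ℤ) - 1 →
      Fiter p q n c (k : ℤ) = Fiter p q n c' (k : ℤ)) :
    ∀ j : ℤ, 1 ≤ j → j ≤ (k : ℤ) → c j = c' j := by
  have hp0 : 0 < p := by omega
  have hq0 : 0 < q := by omega
  have hbc : ∀ n : ℤ, ∀ i, Fiter p q n c i < p * q := fun n => Fiter_bound hp0 hq0 hc n
  have hbc' : ∀ n : ℤ, ∀ i, Fiter p q n c' i < p * q := fun n => Fiter_bound hp0 hq0 hc' n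
  have hstep : ∀ n : ℤ, Fiter p q (n + 1) c = Fca p q (Fiter p q n c) :=
    Fiter_step hp0 hq0 hc
  have hstep' : ∀ n : ℤ, Fiter p q (n + 1) c' = Fca p q (Fiter p q n c') :=
    Fiter_step hp0 hq0 hc'
  have key : ∀ t : ℕ, (t : ℤ) ≤ (k : ℤ) - 1 →
      ∀ n : ℤ, -((k : ℤ) - 1 - t) ≤ n → n ≤ (k : ℤ) - 1 - t →
      Fiter p q n c ((k : ℤ) - t) = Fiter p q n c' ((k : ℤ) - t) := by
    intro t
    induction t with
    | zero =>
      intro _ n h1 h2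
      simpa using htr n (by simpa using h1) (by simpa using h2)
    | succ t ih =>
      intro ht n h1 h2
      have hcast : ((t + 1 : ℕ) : ℤ) = (t : ℤ) + 1 := by push_cast; ring
      rw [hcast] at ht h1 h2 ⊢
      set i : ℤ := (k : ℤ) - t with hi
      have hidx : (k : ℤ) - ((t : ℤ) + 1) = i - 1 := by omega
      rw [hidx]
      have ihm : ∀ m : ℤ, -((k : ℤ) - 1 - t) ≤ m → m ≤ (k : ℤ) - 1 - t →
          Fiter p q m c i = Fiter p q m c' i := fun m hm1 hm2 => ih (by omega) m hm1 hm2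
      -- Step 1: the G-column at i-1 agrees for suitable times
      have hB : ∀ m : ℤ, -((k : ℤ) - 1 - t) ≤ m → m + 1 ≤ (k : ℤ) - 1 - t →
          Gca p q (Fiter p q m c) (i - 1) = Gca p q (Fiter p q m c') (i - 1) := by
        intro m hm1 hm2
        apply crt hpq (Gca_lt hp0 hq0 (hbc m) _) (Gca_lt hp0 hq0 (hbc' m) _)
        · -- mod p : determined by row m at position i
          rw [rel2 hp0 hq0 (hbc m) i, rel2 hp0 hq0 (hbc' m) i,
            ihm m hm1 (by omega)]
        · -- mod q : determined by row m+1 at position i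
          rw [← rel3 hp0 hq0 (hbc m) i, ← rel3 hp0 hq0 (hbc' m) i,
            ← hstep m, ← hstep' m, ihm (m + 1) (by omega) hm2]
      -- Step 2: recover the cell at (n, i-1) by CRT
      apply crt hpq (hbc n _) (hbc' n _)
      · -- mod p : rel4 with the row n-1
        have e1 := rel4 hp0 hq0 (hbc (n - 1)) (i - 1)
        have e1' := rel4 hp0 hq0 (hbc' (n - 1)) (i - 1)
        have hn : Fca p q (Fiter p q (n - 1) c) = Fiter p q n c := by
          rw [← hstep (n - 1)]; norm_num
        have hn' : Fca p q (Fiter p q (n - 1) c') = Fiter p q n c' := by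
          rw [← hstep' (n - 1)]; norm_num
        rw [hn] at e1
        rw [hn'] at e1'
        rw [e1, e1', hB (n - 1) (by omega) (by omega)]
      · -- mod q : rel1 with the G-column at row n
        rw [← rel1 hp0 hq0 (hbc n) i, ← rel1 hp0 hq0 (hbc' n) i,
          hB n (by omega) (by omega)]
  intro j hj1 hj2
  have ht : (((k : ℤ) - j).toNat : ℤ) = (k : ℤ) - j := by omega
  have h0 : Fiter p q 0 c ((k : ℤ) - (((k : ℤ) - j).toNat : ℤ)) =
      Fiter p q 0 c' ((k : ℤ) - (((k : ℤ) - j).toNat : ℤ)) :=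
    key ((k : ℤ) - j).toNat (by omega) 0 (by omega) (by omega)
  rw [ht] at h0
  have hj : (k : ℤ) - ((k : ℤ) - j) = j := by ring
  rw [hj] at h0
  simpa [Fiter] using h0
end

section
/- Let p > q ≥ 2 be relatively prime integers with p ≥ 2q−1, let d ∈ {0,...,q−1}, and let k_d ∈ {0,...,p−1} and j_d ∈ {0,...,q−1} be the unique elements with k_d q ≡ d (mod p) and k_d q = j_d p + d. If a, b ∈ A_{pq} are such that a ≡ k_d (mod p) and b = f_{q,p}(x, a, y) for some x, y ∈ A_{pq}, then b ≡ j_d (mod q). -/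
theorem stmt7 (p q : ℕ) (hq : 2 ≤ q) (hqp : q < p) (hpq : Nat.Coprime p q)
    (h2q : 2 * q - 1 ≤ p)
    (d : ℕ) (hd : d < q)
    (k j : ℕ) (hkp : k < p) (hkq : k * q % p = d) (hjq : j < q) (hjd : k * q = j * p + d)
    (a b x y : ℕ) (ha : a < p * q) (hb : b < p * q) (hx : x < p * q) (hy : y < p * q)
    (hak : a % p = k) (hbf : b = f q p x a y) :
    b % q = j := by
  have hp : 0 < p := by omega
  have hyq : y / p < q := Nat.div_lt_of_lt_mul hy
  have hv : g q p a y = k * q + y / p := by rw [g, hak]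
  have hvdiv : (g q p a y) / p = j := by
    rw [hv]
    have h1 : k * q + y / p = p * j + (d + y / p) := by rw [hjd]; ring
    rw [h1, Nat.mul_add_div hp, Nat.div_eq_of_lt (by omega)]; omega
  subst hbf
  show (f q p x a y) % q = j
  rw [f, g, hvdiv, Nat.add_comm, Nat.add_mul_mod_self_right, Nat.mod_eq_of_lt hjq]
end

section
/- Let p > q ≥ 2 be relatively prime integers with p ≥ 2q−1. If ξ > 0 belongs to Z_{p/q}(Y_{p,q}), then ξ/q belongs to Z_{p/q}(X_{p,q}); in particular, if Z_{p/q}(Y_{p,q}) is nonempty then Z_{p/q}(X_{p,q}) is nonempty. -/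
/-- `Z_{p/q}(S)`: the set of reals `ξ > 0` such that the fractional part of
`ξ(p/q)^i` lies in `S` for every `i ∈ ℕ`. -/
def Zset (p q : ℕ) (S : Set ℝ) : Set ℝ :=
  {ξ : ℝ | 0 < ξ ∧ ∀ i : ℕ, Int.fract (ξ * ((p : ℝ) / (q : ℝ)) ^ i) ∈ S}

lemma fract_div_nat (q : ℕ) (hq : 0 < q) (x : ℝ) :
    Int.fract (x / q) = (((⌊x⌋ % (q : ℤ) : ℤ) : ℝ) + Int.fract x) / q := by
  have hq' : (0:ℝ) < q := by exact_mod_cast hq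
  have hr0 : (0:ℤ) ≤ ⌊x⌋ % (q:ℤ) := Int.emod_nonneg _ (by exact_mod_cast hq.ne')
  have hrq : ⌊x⌋ % (q:ℤ) < q := Int.emod_lt_of_pos _ (by exact_mod_cast hq)
  have hr0' : (0:ℝ) ≤ ((⌊x⌋ % (q:ℤ) : ℤ) : ℝ) := by exact_mod_cast hr0
  have hrq' : ((⌊x⌋ % (q:ℤ) : ℤ) : ℝ) + 1 ≤ q := by exact_mod_cast hrq
  have hf0 := Int.fract_nonneg x
  have hf1 := Int.fract_lt_one x
  rw [Int.fract_eq_iff]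
  refine ⟨div_nonneg (by linarith) hq'.le, (div_lt_one hq').mpr (by linarith), ⌊x⌋ / (q:ℤ), ?_⟩
  have hdm : (q:ℤ) * (⌊x⌋ / (q:ℤ)) + ⌊x⌋ % (q:ℤ) = ⌊x⌋ := Int.mul_ediv_add_emod _ _
  have hfl : Int.fract x = x - ⌊x⌋ := rfl
  have hdm' : (q:ℝ) * ((⌊x⌋ / (q:ℤ) : ℤ) : ℝ) + ((⌊x⌋ % (q:ℤ) : ℤ) : ℝ) = (⌊x⌋ : ℝ) := by
    exact_mod_cast hdm
  field_simp
  linarith [hdm']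

theorem stmt9 (p q : ℕ) (hq : 2 ≤ q) (hqp : q < p) (hpq : Nat.Coprime p q)
    (h2q : 2 * q - 1 ≤ p)
    (kd : ℕ → ℕ) (hkd : ∀ d < q, kd d < p ∧ kd d * q % p = d) :
    (∀ ξ : ℝ,
      ξ ∈ Zset p q (⋃ d ∈ {d : ℕ | d < q},
          Set.Ico ((kd d : ℝ) / p) (((kd d : ℝ) + 1) / p)) →
      ξ / q ∈ Zset p q (⋃ a ∈ {a : ℕ | a < p * q ∧ ∃ d < q, a % p = kd d},
          Set.Ico ((a : ℝ) / (p * q)) (((a : ℝ) + 1) / (p * q)))) ∧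
    ((Zset p q (⋃ d ∈ {d : ℕ | d < q},
        Set.Ico ((kd d : ℝ) / p) (((kd d : ℝ) + 1) / p))).Nonempty →
      (Zset p q (⋃ a ∈ {a : ℕ | a < p * q ∧ ∃ d < q, a % p = kd d},
        Set.Ico ((a : ℝ) / (p * q)) (((a : ℝ) + 1) / (p * q)))).Nonempty) := by
  have hq0 : 0 < q := by omega
  have hp0 : 0 < p := by omega
  have hq' : (0:ℝ) < q := by exact_mod_cast hq0
  have hp' : (0:ℝ) < p := by exact_mod_cast hp0
  have main : ∀ ξ : ℝ,
      ξ ∈ Zset p q (⋃ d ∈ {d : ℕ | d < q},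
          Set.Ico ((kd d : ℝ) / p) (((kd d : ℝ) + 1) / p)) →
      ξ / q ∈ Zset p q (⋃ a ∈ {a : ℕ | a < p * q ∧ ∃ d < q, a % p = kd d},
          Set.Ico ((a : ℝ) / (p * q)) (((a : ℝ) + 1) / (p * q))) := by
    intro ξ hξ
    obtain ⟨hpos, hmem⟩ := hξ
    refine ⟨div_pos hpos hq', fun i => ?_⟩
    set x : ℝ := ξ * ((p:ℝ)/(q:ℝ)) ^ i with hx
    have hxq : ξ / q * ((p:ℝ)/(q:ℝ)) ^ i = x / q := by ring
    rw [hxq, fract_div_nat q hq0 x]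
    obtain ⟨S, ⟨d, rfl⟩, hS⟩ := hmem i
    simp only [Set.mem_iUnion, Set.mem_setOf_eq, exists_prop] at hS ⊢
    obtain ⟨hd, hlo, hhi⟩ := hS
    have hkdp : kd d < p := (hkd d hd).1
    set r : ℤ := ⌊x⌋ % (q:ℤ) with hr
    have hr0 : (0:ℤ) ≤ r := Int.emod_nonneg _ (by exact_mod_cast hq0.ne')
    have hrq : r < q := Int.emod_lt_of_pos _ (by exact_mod_cast hq0)
    refine ⟨r.toNat * p + kd d, ⟨?_, d, hd, ?_⟩, ?_, ?_⟩
    · have : r.toNat < q := by omega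
      calc r.toNat * p + kd d < r.toNat * p + p := by omega
        _ = (r.toNat + 1) * p := by ring
        _ ≤ q * p := Nat.mul_le_mul_right _ (by omega)
        _ = p * q := Nat.mul_comm _ _
    · rw [Nat.add_comm, Nat.add_mul_mod_self_right, Nat.mod_eq_of_lt hkdp]
    · -- lower bound
      have hr' : ((r.toNat : ℝ)) = (r : ℝ) := by exact_mod_cast Int.toNat_of_nonneg hr0
      push_cast
      rw [hr', div_le_div_iff₀ (by positivity) hq']
      have h1 : (kd d : ℝ) ≤ Int.fract x * p := by
        rw [div_le_iff₀ hp'] at hlo; linarith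
      have hr0' : (0:ℝ) ≤ (r:ℝ) := by exact_mod_cast hr0
      nlinarith [hq'.le]
    · have hr' : ((r.toNat : ℝ)) = (r : ℝ) := by exact_mod_cast Int.toNat_of_nonneg hr0
      push_cast
      rw [hr', div_lt_div_iff₀ hq' (by positivity)]
      have h1 : Int.fract x * p < (kd d : ℝ) + 1 := by
        rw [lt_div_iff₀ hp'] at hhi; linarith
      have hr0' : (0:ℝ) ≤ (r:ℝ) := by exact_mod_cast hr0
      nlinarith [hq'.le]
  exact ⟨main, fun ⟨ξ, hξ⟩ => ⟨ξ / q, main ξ hξ⟩⟩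
end

section
/- Let p > q ≥ 2 be relatively prime integers with p ≥ 2q−1, and let k > 0. Then there exists a set S ⊆ [0,1) which is a union of at most q^{2k} half-open intervals, each of length (pq)^{-k} (so of total length at most (q/p)^k), such that Z_{p/q}(S) is nonempty. -/
open scoped ENNReal

namespace Stmt10Aux

def Nseq (p q : ℕ) : ℕ → ℕ
  | 0 => 1
  | m + 1 => (p * Nseq p q m + q - 1) / q

def vseq (p q m : ℕ) : ℕ := q * Nseq p q (m + 1) - p * Nseq p q m

lemma Nseq_pos (p q : ℕ) (hq : 2 ≤ q) (hp : 0 < p) : ∀ m, 0 < Nseq p q m := by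
  intro m
  induction m with
  | zero => simp [Nseq]
  | succ m ih =>
    have h1 : 1 ≤ p * Nseq p q m := Nat.one_le_iff_ne_zero.2 (Nat.mul_ne_zero hp.ne' ih.ne')
    have : q ≤ p * Nseq p q m + q - 1 := by omega
    simpa [Nseq] using Nat.div_pos this (by omega)

lemma vseq_eq (p q : ℕ) (hq : 2 ≤ q) (hp : 0 < p) (m : ℕ) :
    q * Nseq p q (m + 1) = p * Nseq p q m + vseq p q m ∧ vseq p q m < q := by
  have hN := Nseq_pos p q hq hp m
  have h1 : 1 ≤ p * Nseq p q m := Nat.one_le_iff_ne_zero.2 (Nat.mul_ne_zero hp.ne' hN.ne')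
  have h := Nat.div_add_mod (p * Nseq p q m + q - 1) q
  have h2 : (p * Nseq p q m + q - 1) % q < q := Nat.mod_lt _ (by omega)
  simp only [vseq, Nseq]
  omega

lemma key_id (p q : ℕ) (hq : 2 ≤ q) (hp : 0 < p) (m : ℕ) : ∀ t : ℕ,
    q ^ t * Nseq p q (m + t)
      = p ^ t * Nseq p q m
        + ∑ j ∈ Finset.range t, p ^ (t - 1 - j) * q ^ j * vseq p q (m + j) := by
  intro t
  induction t with
  | zero => simp
  | succ t ih =>
    have hv := (vseq_eq p q hq hp (m + t)).1
    have hsum : ∀ j ∈ Finset.range t,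
        p * (p ^ (t - 1 - j) * q ^ j * vseq p q (m + j))
          = p ^ (t - j) * q ^ j * vseq p q (m + j) := by
      intro j hj
      have hj' : j < t := Finset.mem_range.1 hj
      have he : t - 1 - j + 1 = t - j := by omega
      rw [← he, pow_succ]
      ring
    calc q ^ (t + 1) * Nseq p q (m + (t + 1))
        = q ^ t * (q * Nseq p q (m + t + 1)) := by rw [pow_succ]; ring_nf
      _ = q ^ t * (p * Nseq p q (m + t) + vseq p q (m + t)) := by rw [hv]
      _ = p * (q ^ t * Nseq p q (m + t)) + q ^ t * vseq p q (m + t) := by ring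
      _ = p * (p ^ t * Nseq p q m
            + ∑ j ∈ Finset.range t, p ^ (t - 1 - j) * q ^ j * vseq p q (m + j))
            + q ^ t * vseq p q (m + t) := by rw [ih]
      _ = p ^ (t + 1) * Nseq p q m
            + (∑ j ∈ Finset.range t, p * (p ^ (t - 1 - j) * q ^ j * vseq p q (m + j))
              + q ^ t * vseq p q (m + t)) := by
          rw [← Finset.mul_sum, pow_succ]; ring
      _ = p ^ (t + 1) * Nseq p q m
            + ∑ j ∈ Finset.range (t + 1), p ^ (t + 1 - 1 - j) * q ^ j * vseq p q (m + j) := by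
          rw [Finset.sum_congr rfl hsum, Finset.sum_range_succ]
          simp

lemma exists_good (p q : ℕ) (hq : 2 ≤ q) (hqp : q < p) (hpq : Nat.Coprime p q)
    (h2q : 2 * q - 1 ≤ p) (m : ℕ) : ∃ j, m ≤ j ∧ vseq p q j + q < p := by
  have hp : 0 < p := by omega
  by_cases hcase : 2 * q ≤ p
  · exact ⟨m, le_rfl, by have := (vseq_eq p q hq hp m).2; omega⟩
  · have hp2q : p = 2 * q - 1 := by omega
    by_contra hcon
    push_neg at hcon
    have hv : ∀ j, m ≤ j → vseq p q j = q - 1 := by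
      intro j hj
      have h1 := (vseq_eq p q hq hp j).2
      have h2 := hcon j hj
      omega
    have hiter : ∀ t, p ^ t * (Nseq p q m + 1) = q ^ t * (Nseq p q (m + t) + 1) := by
      intro t
      induction t with
      | zero => simp
      | succ t ih =>
        have he := (vseq_eq p q hq hp (m + t)).1
        have hvv := hv (m + t) (Nat.le_add_right m t)
        have e1 : q * (Nseq p q (m + t + 1) + 1) = q * Nseq p q (m + t + 1) + q :=
          Nat.mul_succ q _
        have e2 : p * (Nseq p q (m + t) + 1) = p * Nseq p q (m + t) + p :=
          Nat.mul_succ p _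
        have e3 : p * (Nseq p q (m + t) + 1) = q * (Nseq p q (m + t + 1) + 1) := by omega
        calc p ^ (t + 1) * (Nseq p q m + 1)
            = p ^ t * (p * (Nseq p q m + 1)) := by rw [pow_succ]; ring
          _ = p * (p ^ t * (Nseq p q m + 1)) := by ring
          _ = p * (q ^ t * (Nseq p q (m + t) + 1)) := by rw [ih]
          _ = q ^ t * (p * (Nseq p q (m + t) + 1)) := by ring
          _ = q ^ t * (q * (Nseq p q (m + t + 1) + 1)) := by rw [e3]
          _ = q ^ (t + 1) * (Nseq p q (m + (t + 1)) + 1) := by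
              rw [pow_succ]; ring_nf
    set t := Nseq p q m + 1 with ht
    have hdvd : q ^ t ∣ (Nseq p q m + 1) * p ^ t := ⟨Nseq p q (m + t) + 1, by rw [mul_comm]; exact hiter t⟩
    have hcop : Nat.Coprime (q ^ t) (p ^ t) := Nat.Coprime.pow _ _ hpq.symm
    have hdvd2 : q ^ t ∣ Nseq p q m + 1 := by
      exact hcop.dvd_of_dvd_mul_right hdvd
    have hle : q ^ t ≤ Nseq p q m + 1 := Nat.le_of_dvd (by omega) hdvd2
    have h2t : t < 2 ^ t := Nat.lt_two_pow_self
    have : 2 ^ t ≤ q ^ t := Nat.pow_le_pow_left hq t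
    omega


def Dset (p q k : ℕ) : Finset ℕ :=
  Finset.image
    (fun g : Fin k → Fin q => ∑ j : Fin k, p ^ (k - 1 - (j : ℕ)) * q ^ (j : ℕ) * (g j : ℕ))
    Finset.univ

def Aset (p q k : ℕ) : Finset ℕ :=
  (Finset.range (p ^ k * q ^ k)).filter (fun a =>
    (q ^ k * a) % p ^ k ∈ (Dset p q k).image (· % p ^ k) ∧
    (p ^ k * a) % q ^ k ∈ (Dset p q k).image (fun V => (q ^ k - V % q ^ k) % q ^ k))

lemma Dset_card (p q k : ℕ) : (Dset p q k).card ≤ q ^ k := by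
  refine le_trans (Finset.card_image_le) ?_
  simp [Finset.card_univ]

lemma Aset_card (p q k : ℕ) (hq : 2 ≤ q) (hqp : q < p) (hpq : Nat.Coprime p q) :
    (Aset p q k).card ≤ q ^ (2 * k) := by
  have hPQ : Nat.Coprime (p ^ k) (q ^ k) := Nat.Coprime.pow _ _ hpq
  have hMpos : 0 < p ^ k * q ^ k :=
    Nat.mul_pos (pow_pos (by omega) k) (pow_pos (by omega) k)
  have hinj : Set.InjOn (fun a => ((q ^ k * a) % p ^ k, (p ^ k * a) % q ^ k)) (Aset p q k) := by
    intro a ha b hb hab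
    simp only [Prod.mk.injEq] at hab
    have ha' : a < p ^ k * q ^ k := Finset.mem_range.1 (Finset.mem_filter.1 ha).1
    have hb' : b < p ^ k * q ^ k := Finset.mem_range.1 (Finset.mem_filter.1 hb).1
    have h1 : a ≡ b [MOD p ^ k] :=
      (Nat.ModEq.cancel_left_of_coprime (hPQ)
        (hab.1 : q ^ k * a ≡ q ^ k * b [MOD p ^ k]))
    have h2 : a ≡ b [MOD q ^ k] :=
      (Nat.ModEq.cancel_left_of_coprime (hPQ.symm)
        (hab.2 : p ^ k * a ≡ p ^ k * b [MOD q ^ k]))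
    have h3 : a ≡ b [MOD p ^ k * q ^ k] :=
      (Nat.modEq_and_modEq_iff_modEq_mul hPQ).1 ⟨h1, h2⟩
    have := h3.eq_of_lt_of_lt ha' hb'
    exact this
  have hmaps : ∀ a ∈ Aset p q k,
      (fun a => ((q ^ k * a) % p ^ k, (p ^ k * a) % q ^ k)) a ∈
        ((Dset p q k).image (· % p ^ k)) ×ˢ
          ((Dset p q k).image (fun V => (q ^ k - V % q ^ k) % q ^ k)) := by
    intro a ha
    have h := (Finset.mem_filter.1 ha).2
    exact Finset.mem_product.2 ⟨h.1, h.2⟩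
  calc (Aset p q k).card
      ≤ (((Dset p q k).image (· % p ^ k)) ×ˢ
          ((Dset p q k).image (fun V => (q ^ k - V % q ^ k) % q ^ k))).card :=
        Finset.card_le_card_of_injOn _ hmaps hinj
    _ ≤ q ^ k * q ^ k := by
        rw [Finset.card_product]
        exact Nat.mul_le_mul (le_trans (Finset.card_image_le) (Dset_card p q k))
          (le_trans (Finset.card_image_le) (Dset_card p q k))
    _ = q ^ (2 * k) := by rw [two_mul, pow_add]


lemma mod_compl (Q x V : ℕ) (hQ : 0 < Q) (h : (x + V) % Q = 0) :
    x % Q = (Q - V % Q) % Q := by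
  have h2 : (x % Q + V % Q) % Q = 0 := by rw [← Nat.add_mod]; exact h
  have hx : x % Q < Q := Nat.mod_lt _ hQ
  have hs : V % Q < Q := Nat.mod_lt _ hQ
  generalize hxx : x % Q = r at *
  generalize hss : V % Q = s at *
  have hd := Nat.div_add_mod (r + s) Q
  rw [h2, Nat.add_zero] at hd
  have hdle : (r + s) / Q ≤ 1 := by
    by_contra hcon
    push_neg at hcon
    have : 2 * Q ≤ Q * ((r + s) / Q) := by
      calc 2 * Q = Q * 2 := by ring
        _ ≤ Q * ((r + s) / Q) := Nat.mul_le_mul_left Q hcon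
    omega
  rcases Nat.le_one_iff_eq_zero_or_eq_one.1 hdle with hh | hh <;> rw [hh] at hd
  · simp only [Nat.mul_zero] at hd
    have : r = 0 ∧ s = 0 := by omega
    rw [this.1, this.2, Nat.sub_zero, Nat.mod_self]
  · simp only [Nat.mul_one] at hd
    have hs1 : 1 ≤ s := by omega
    rw [Nat.mod_eq_of_lt (show Q - s < Q by omega)]
    omega

lemma mem_Aset (p q k : ℕ) (hq : 2 ≤ q) (hqp : q < p) (i : ℕ) :
    Nseq p q (i + k) % (p ^ k * q ^ k) ∈ Aset p q k := by
  have hp : 0 < p := by omega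
  have hP : 0 < p ^ k := pow_pos hp k
  have hQ : 0 < q ^ k := pow_pos (by omega) k
  set M := p ^ k * q ^ k with hM
  set a := Nseq p q (i + k) % M with ha
  have hamod : a % p ^ k = Nseq p q (i + k) % p ^ k := by
    rw [ha, Nat.mod_mod_of_dvd _ ⟨q ^ k, rfl⟩]
  have hamodQ : a % q ^ k = Nseq p q (i + k) % q ^ k := by
    rw [ha, Nat.mod_mod_of_dvd _ ⟨p ^ k, mul_comm _ _⟩]
  refine Finset.mem_filter.2 ⟨Finset.mem_range.2 (Nat.mod_lt _ (Nat.mul_pos hP hQ)), ?_, ?_⟩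
  · -- first congruence: (q^k * a) % p^k = V1 % p^k
    have hid := key_id p q hq hp i k
    set V1 := ∑ j ∈ Finset.range k, p ^ (k - 1 - j) * q ^ j * vseq p q (i + j) with hV1
    have hVD : V1 ∈ Dset p q k := by
      refine Finset.mem_image.2 ⟨fun j : Fin k => ⟨vseq p q (i + (j : ℕ)),
        (vseq_eq p q hq hp _).2⟩, Finset.mem_univ _, ?_⟩
      rw [hV1, Fin.sum_univ_eq_sum_range (fun j => p ^ (k - 1 - j) * q ^ j * vseq p q (i + j)) k]
    refine Finset.mem_image.2 ⟨V1, hVD, ?_⟩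
    have h1 : (q ^ k * a) % p ^ k = (q ^ k * Nseq p q (i + k)) % p ^ k := by
      conv_lhs => rw [ha]
      rw [Nat.mul_mod, Nat.mod_mod_of_dvd _ (⟨q ^ k, rfl⟩ : p ^ k ∣ M), ← Nat.mul_mod]
    rw [h1, hid, add_comm, Nat.add_mul_mod_self_left]
  · -- second congruence
    have hid := key_id p q hq hp (i + k) k
    set V2 := ∑ j ∈ Finset.range k, p ^ (k - 1 - j) * q ^ j * vseq p q (i + k + j) with hV2
    have hVD : V2 ∈ Dset p q k := by
      refine Finset.mem_image.2 ⟨fun j : Fin k => ⟨vseq p q (i + k + (j : ℕ)),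
        (vseq_eq p q hq hp _).2⟩, Finset.mem_univ _, ?_⟩
      rw [hV2, Fin.sum_univ_eq_sum_range
        (fun j => p ^ (k - 1 - j) * q ^ j * vseq p q (i + k + j)) k]
    refine Finset.mem_image.2 ⟨V2, hVD, ?_⟩
    have h0 : (p ^ k * Nseq p q (i + k) + V2) % q ^ k = 0 := by
      rw [← hid, Nat.mul_mod, Nat.mod_self, zero_mul, Nat.zero_mod]
    have h1 : (p ^ k * a) % q ^ k = (p ^ k * Nseq p q (i + k)) % q ^ k := by
      conv_lhs => rw [ha]
      rw [Nat.mul_mod, Nat.mod_mod_of_dvd _ (⟨p ^ k, mul_comm _ _⟩ : q ^ k ∣ M), ← Nat.mul_mod]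
    rw [h1]
    exact (mod_compl (q ^ k) _ V2 hQ h0).symm

end Stmt10Aux

open Stmt10Aux in
theorem stmt10 (p q : ℕ) (hq : 2 ≤ q) (hqp : q < p) (hpq : Nat.Coprime p q)
    (h2q : 2 * q - 1 ≤ p) (k : ℕ) (hk : 0 < k) :
    ∃ (n : ℕ) (l : Fin n → ℝ), n ≤ q ^ (2 * k) ∧
      (⋃ j, Set.Ico (l j) (l j + ((p * q : ℝ))⁻¹ ^ k)) ⊆ Set.Ico (0 : ℝ) 1 ∧
      MeasureTheory.volume (⋃ j, Set.Ico (l j) (l j + ((p * q : ℝ))⁻¹ ^ k)) ≤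
        ENNReal.ofReal (((q : ℝ) / (p : ℝ)) ^ k) ∧
      (Zset p q (⋃ j, Set.Ico (l j) (l j + ((p * q : ℝ))⁻¹ ^ k))).Nonempty := by
  classical
  have hp : 0 < p := by omega
  have hq0 : 0 < q := by omega
  have hpR : (0:ℝ) < (p : ℝ) := by exact_mod_cast hp
  have hqR : (0:ℝ) < (q : ℝ) := by exact_mod_cast hq0
  set Λ : ℝ := ((p * q : ℝ))⁻¹ ^ k with hΛ
  have hΛpos : 0 < Λ := by rw [hΛ]; positivity
  set M : ℕ := p ^ k * q ^ k with hM
  have hMpos : 0 < M := Nat.mul_pos (pow_pos hp _) (pow_pos hq0 _)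
  have hMΛ : (M : ℝ) * Λ = 1 := by
    rw [hΛ, hM]
    push_cast
    rw [inv_pow, ← mul_pow]
    exact mul_inv_cancel₀ (by positivity)
  set A : Finset ℕ := Aset p q k with hA
  have hAlt : ∀ a ∈ A, a < M := by
    intro a ha
    exact Finset.mem_range.1 (Finset.mem_filter.1 ha).1
  refine ⟨A.card, fun j => ((A.equivFin.symm j : ℕ) : ℝ) * Λ, Aset_card p q k hq hqp hpq,
    ?_, ?_, ?_⟩
  · -- subset of [0,1)
    intro y hy
    simp only [Set.mem_iUnion] at hy
    obtain ⟨j, hj⟩ := hy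
    set a : ℕ := (A.equivFin.symm j : ℕ) with haj
    have haA : a ∈ A := (A.equivFin.symm j).2
    have halt : a < M := hAlt a haA
    have key : (a : ℝ) * Λ + Λ ≤ 1 := by
      have h1 : (a : ℝ) + 1 ≤ (M : ℝ) := by exact_mod_cast halt
      calc (a : ℝ) * Λ + Λ = ((a : ℝ) + 1) * Λ := by ring
        _ ≤ (M : ℝ) * Λ := mul_le_mul_of_nonneg_right h1 hΛpos.le
        _ = 1 := hMΛ
    constructor
    · exact le_trans (by positivity) hj.1
    · exact lt_of_lt_of_le hj.2 key
  · -- measure bound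
    have hid : ((q : ℝ)) ^ (2 * k) * Λ = ((q : ℝ) / (p : ℝ)) ^ k := by
      rw [hΛ]
      rw [div_pow, inv_pow, eq_div_iff (by positivity : ((p:ℝ)) ^ k ≠ 0)]
      rw [mul_pow, two_mul, pow_add]
      field_simp
    calc MeasureTheory.volume (⋃ j, Set.Ico (((A.equivFin.symm j : ℕ) : ℝ) * Λ)
            (((A.equivFin.symm j : ℕ) : ℝ) * Λ + Λ))
        ≤ ∑' j : Fin A.card, MeasureTheory.volume (Set.Ico (((A.equivFin.symm j : ℕ) : ℝ) * Λ)
            (((A.equivFin.symm j : ℕ) : ℝ) * Λ + Λ)) := MeasureTheory.measure_iUnion_le _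
      _ = ∑' _j : Fin A.card, ENNReal.ofReal Λ := by
          congr 1; funext j; rw [Real.volume_Ico]; congr 1; ring
      _ = (A.card : ℝ≥0∞) * ENNReal.ofReal Λ := by
          rw [tsum_fintype]
          simp [Finset.sum_const, Finset.card_univ, nsmul_eq_mul]
      _ ≤ ((q ^ (2 * k) : ℕ) : ℝ≥0∞) * ENNReal.ofReal Λ := by
          apply mul_le_mul_left
          exact_mod_cast Aset_card p q k hq hqp hpq
      _ = ENNReal.ofReal (((q : ℝ)) ^ (2 * k) * Λ) := by
          rw [ENNReal.ofReal_mul (by positivity)]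
          congr 1
          rw [← ENNReal.ofReal_natCast]
          congr 1
          push_cast
          ring
      _ = ENNReal.ofReal (((q : ℝ) / (p : ℝ)) ^ k) := by rw [hid]
  · -- Zset nonempty
    set r : ℝ := (q : ℝ) / (p : ℝ) with hr
    set s : ℝ := (p : ℝ) / (q : ℝ) with hs
    have hrpos : 0 < r := by rw [hr]; positivity
    have hspos : 0 < s := by rw [hs]; positivity
    have hrs : r * s = 1 := by rw [hr, hs]; field_simp
    -- scaling helpers
    have hstep : ∀ a b mm : ℕ, q * a ≤ p * b → (a : ℝ) * r ^ (mm + 1) ≤ (b : ℝ) * r ^ mm := by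
      intro a b mm h
      have h' : (q : ℝ) * a ≤ (p : ℝ) * b := by exact_mod_cast h
      rw [pow_succ]
      calc (a : ℝ) * (r ^ mm * r) = ((a : ℝ) * r) * r ^ mm := by ring
        _ ≤ (b : ℝ) * r ^ mm := by
            apply mul_le_mul_of_nonneg_right _ (by positivity)
            rw [hr, mul_div_assoc', div_le_iff₀ hpR]
            nlinarith
    have hsteplt : ∀ a b mm : ℕ, q * a < p * b → (a : ℝ) * r ^ (mm + 1) < (b : ℝ) * r ^ mm := by
      intro a b mm h
      have h' : (q : ℝ) * a < (p : ℝ) * b := by exact_mod_cast h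
      rw [pow_succ]
      calc (a : ℝ) * (r ^ mm * r) = ((a : ℝ) * r) * r ^ mm := by ring
        _ < (b : ℝ) * r ^ mm := by
            apply mul_lt_mul_of_pos_right _ (by positivity)
            rw [hr, mul_div_assoc', div_lt_iff₀ hpR]
            nlinarith
    have hstep2 : ∀ a b mm : ℕ, p * b ≤ q * a → (b : ℝ) * r ^ mm ≤ (a : ℝ) * r ^ (mm + 1) := by
      intro a b mm h
      have h' : (p : ℝ) * b ≤ (q : ℝ) * a := by exact_mod_cast h
      rw [pow_succ]
      calc (b : ℝ) * r ^ mm ≤ ((a : ℝ) * r) * r ^ mm := by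
            apply mul_le_mul_of_nonneg_right _ (by positivity)
            rw [hr, mul_div_assoc', le_div_iff₀ hpR]
            nlinarith
        _ = (a : ℝ) * (r ^ mm * r) := by ring
    set x : ℕ → ℝ := fun mm => (Nseq p q mm : ℝ) * r ^ mm with hx
    set R : ℕ → ℝ := fun mm => ((Nseq p q mm + 1 : ℕ) : ℝ) * r ^ mm with hR
    have hxmono : Monotone x := by
      apply monotone_nat_of_le_succ
      intro mm
      have hv := (vseq_eq p q hq hp mm).1
      exact hstep2 (Nseq p q (mm + 1)) (Nseq p q mm) mm (by omega)
    have hRanti : Antitone R := by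
      apply antitone_nat_of_succ_le
      intro mm
      have hv := (vseq_eq p q hq hp mm).1
      have hv2 := (vseq_eq p q hq hp mm).2
      apply hstep (Nseq p q (mm + 1) + 1) (Nseq p q mm + 1) mm
      have e1 : q * (Nseq p q (mm + 1) + 1) = q * Nseq p q (mm + 1) + q := by ring
      have e2 : p * (Nseq p q mm + 1) = p * Nseq p q mm + p := by ring
      omega
    have hxR : ∀ mm t : ℕ, x mm ≤ R t := by
      intro mm t
      have hself : ∀ u : ℕ, x u ≤ R u := by
        intro u
        apply mul_le_mul_of_nonneg_right _ (by positivity)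
        exact_mod_cast Nat.le_succ _
      rcases le_total mm t with h | h
      · exact le_trans (hxmono h) (hself t)
      · exact le_trans (hself mm) (hRanti h)
    have hbdd : BddAbove (Set.range x) := ⟨R 0, by rintro _ ⟨mm, rfl⟩; exact hxR mm 0⟩
    set ζ : ℝ := sSup (Set.range x) with hζ
    have hζx : ∀ mm, x mm ≤ ζ := fun mm => le_csSup hbdd ⟨mm, rfl⟩
    have hζR : ∀ t, ζ ≤ R t := fun t =>
      csSup_le (Set.range_nonempty x) (by rintro _ ⟨mm, rfl⟩; exact hxR mm t)
    have hζRs : ∀ mm, ζ < R mm := by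
      intro mm
      obtain ⟨j, hj, hvj⟩ := exists_good p q hq hqp hpq h2q mm
      have hv := (vseq_eq p q hq hp j).1
      have h1 : R (j + 1) < R j := by
        apply hsteplt (Nseq p q (j + 1) + 1) (Nseq p q j + 1) j
        have e1 : q * (Nseq p q (j + 1) + 1) = q * Nseq p q (j + 1) + q := by ring
        have e2 : p * (Nseq p q j + 1) = p * Nseq p q j + p := by ring
        omega
      exact lt_of_le_of_lt (hζR (j + 1)) (lt_of_lt_of_le h1 (hRanti hj))
    have hζsm : ∀ mm : ℕ, (Nseq p q mm : ℝ) ≤ ζ * s ^ mm ∧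
        ζ * s ^ mm < (Nseq p q mm : ℝ) + 1 := by
      intro mm
      have hrs1 : r ^ mm * s ^ mm = 1 := by rw [← mul_pow, hrs, one_pow]
      constructor
      · calc (Nseq p q mm : ℝ) = ((Nseq p q mm : ℝ) * r ^ mm) * s ^ mm := by
              rw [mul_assoc, hrs1, mul_one]
          _ ≤ ζ * s ^ mm := mul_le_mul_of_nonneg_right (hζx mm) (by positivity)
      · calc ζ * s ^ mm < R mm * s ^ mm := mul_lt_mul_of_pos_right (hζRs mm) (by positivity)
          _ = ((Nseq p q mm : ℝ) + 1) * (r ^ mm * s ^ mm) := by rw [hR]; push_cast; ring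
          _ = (Nseq p q mm : ℝ) + 1 := by rw [hrs1, mul_one]
    have hζ1 : (1 : ℝ) ≤ ζ := by
      have h0 := hζx 0
      simpa [hx, Nseq] using h0
    refine ⟨Λ * (ζ * s ^ k), by positivity, ?_⟩
    intro i
    rw [← hs]
    have hexp : Λ * (ζ * s ^ k) * s ^ i = Λ * (ζ * s ^ (k + i)) := by
      rw [pow_add]; ring
    rw [hexp]
    set mm := k + i with hmm
    set N : ℕ := Nseq p q mm with hN
    set a : ℕ := N % M with ha
    set nn : ℕ := N / M with hnn
    have hNd : M * nn + a = N := Nat.div_add_mod N M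
    have haM : a < M := Nat.mod_lt _ hMpos
    have hNcast : (N : ℝ) = (M : ℝ) * nn + a := by exact_mod_cast hNd.symm
    have hΛN : Λ * (N : ℝ) = (nn : ℝ) + (a : ℝ) * Λ := by
      rw [hNcast]
      calc Λ * ((M : ℝ) * nn + a) = ((M : ℝ) * Λ) * nn + a * Λ := by ring
        _ = (nn : ℝ) + (a : ℝ) * Λ := by rw [hMΛ]; ring
    have hyl : (nn : ℝ) + (a : ℝ) * Λ ≤ Λ * (ζ * s ^ mm) := by
      rw [← hΛN]
      exact mul_le_mul_of_nonneg_left (hζsm mm).1 hΛpos.le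
    have hyu : Λ * (ζ * s ^ mm) < (nn : ℝ) + (a : ℝ) * Λ + Λ := by
      have := (hζsm mm).2
      have h2 : Λ * (ζ * s ^ mm) < Λ * ((N : ℝ) + 1) := by
        exact mul_lt_mul_of_pos_left this hΛpos
      calc Λ * (ζ * s ^ mm) < Λ * ((N : ℝ) + 1) := h2
        _ = Λ * (N : ℝ) + Λ := by ring
        _ = (nn : ℝ) + (a : ℝ) * Λ + Λ := by rw [hΛN]
    have haΛ1 : (a : ℝ) * Λ + Λ ≤ 1 := by
      have h1 : (a : ℝ) + 1 ≤ (M : ℝ) := by exact_mod_cast haM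
      calc (a : ℝ) * Λ + Λ = ((a : ℝ) + 1) * Λ := by ring
        _ ≤ (M : ℝ) * Λ := mul_le_mul_of_nonneg_right h1 hΛpos.le
        _ = 1 := hMΛ
    have h0aΛ : 0 ≤ (a : ℝ) * Λ := by positivity
    have hfl : ⌊Λ * (ζ * s ^ mm)⌋ = (nn : ℤ) := by
      rw [Int.floor_eq_iff]
      constructor
      · push_cast
        linarith
      · push_cast
        linarith
    have hfr : Int.fract (Λ * (ζ * s ^ mm)) = Λ * (ζ * s ^ mm) - (nn : ℝ) := by
      rw [Int.fract, hfl]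
      push_cast
      ring
    have hmem : a ∈ A := by
      have := mem_Aset p q k hq hqp i
      rw [hA, ha, hN, hmm, add_comm k i]
      exact this
    rw [Set.mem_iUnion]
    refine ⟨A.equivFin ⟨a, hmem⟩, ?_⟩
    have hlj : ((A.equivFin.symm (A.equivFin ⟨a, hmem⟩) : ℕ) : ℝ) = (a : ℝ) := by
      rw [Equiv.symm_apply_apply]
    rw [hfr]
    constructor
    · simp only [Equiv.symm_apply_apply]; linarith
    · simp only [Equiv.symm_apply_apply]; linarith
end

section
/- Let p, q ≥ 2 be relatively prime integers, let k ≥ 2, let w₁, w₂ be words of length k over A_{pq}, and let t > 0 be a natural number. Then: (1) if int(w₁) < q^t, then int(G_{p,q}(w₁)) < q^{t−1}; and (2) if int(w₂) ≡ int(w₁) + q^t (mod (pq)^k), then int(G_{p,q}(w₂)) ≡ int(G_{p,q}(w₁)) + q^{t−1} (mod (pq)^{k−1}). -/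
/-- `G_{p,q}` applied to a word: the `i`-th letter of the image is `g` applied to the
`i`-th and `(i+1)`-st letters of `w`; the image is one letter shorter. -/
def Gw (p q : ℕ) (w : List ℕ) : List ℕ := List.zipWith (g p q) w w.tail

/-- `int(w)`: the integer having `w` as a base-`b` representation
(the first letter of `w` is the most significant digit). -/
def intw (b : ℕ) (w : List ℕ) : ℕ := Nat.ofDigits b w.reverse

lemma intw_cons (b x : ℕ) (w : List ℕ) :
    intw b (x :: w) = x * b ^ w.length + intw b w := by
  simp [intw, Nat.ofDigits_append, Nat.ofDigits_singleton]
  ring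

lemma key (p q : ℕ) (hq0 : 0 < q) (x : ℕ) (w : List ℕ) :
    intw (p * q) (x :: w) / q
      = x / q * (p * q) ^ w.length + intw (p * q) (Gw p q (x :: w)) := by
  induction w generalizing x with
  | nil => simp [intw, Gw, Nat.ofDigits_singleton]
  | cons y w' ih =>
    have hdvd : q ∣ x * (p * q) ^ (w'.length + 1) := by
      refine Dvd.dvd.mul_left ?_ x
      exact dvd_pow (Dvd.intro_left p rfl) (Nat.succ_ne_zero _)
    have hGw : Gw p q (x :: y :: w') = g p q x y :: Gw p q (y :: w') := by
      simp [Gw]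
    rw [intw_cons]
    simp only [List.length_cons]
    rw [Nat.add_div_of_dvd_right hdvd, ih y, hGw, intw_cons]
    have hlen : (Gw p q (y :: w')).length = w'.length := by
      simp [Gw]
    rw [hlen]
    have hx : q * (x / q) + x % q = x := Nat.div_add_mod x q
    have hdiv : x * (p * q) ^ (w'.length + 1) / q = x * p * (p * q) ^ w'.length := by
      rw [pow_succ]
      rw [show x * ((p * q) ^ w'.length * (p * q)) = x * p * (p * q) ^ w'.length * q by ring]
      exact Nat.mul_div_cancel _ hq0
    rw [hdiv, g]
    have h' : x * p = x / q * (p * q) + x % q * p := by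
      conv_lhs => rw [← Nat.div_add_mod x q]
      ring
    rw [pow_succ, h']
    ring

lemma div_modEq {q m a b : ℕ} (hq0 : 0 < q) (hab : a ≡ b [MOD q * m])
    (h : a % q = b % q) : a / q ≡ b / q [MOD m] := by
  have hab' := (Nat.modEq_iff_dvd).mp hab
  rw [Nat.modEq_iff_dvd]
  have ha : (a : ℤ) = q * (a / q : ℕ) + (a % q : ℕ) := by
    exact_mod_cast (Nat.div_add_mod a q).symm
  have hb : (b : ℤ) = q * (b / q : ℕ) + (b % q : ℕ) := by
    exact_mod_cast (Nat.div_add_mod b q).symm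
  have : ((q : ℤ) * m) ∣ (q : ℤ) * ((b / q : ℕ) - (a / q : ℕ)) := by
    push_cast at hab'
    convert hab' using 1
    rw [ha, hb, h]
    ring
  push_cast at this ⊢
  exact (mul_dvd_mul_iff_left (by exact_mod_cast hq0.ne' : (q : ℤ) ≠ 0)).mp this

theorem stmt13 (p q : ℕ) (hp : 2 ≤ p) (hq : 2 ≤ q) (hpq : Nat.Coprime p q)
    (k : ℕ) (hk : 2 ≤ k) (w₁ w₂ : List ℕ)
    (hw₁ : w₁.length = k) (hw₂ : w₂.length = k)
    (hb₁ : ∀ x ∈ w₁, x < p * q) (hb₂ : ∀ x ∈ w₂, x < p * q)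
    (t : ℕ) (ht : 0 < t) :
    (intw (p * q) w₁ < q ^ t → intw (p * q) (Gw p q w₁) < q ^ (t - 1)) ∧
    (intw (p * q) w₂ ≡ intw (p * q) w₁ + q ^ t [MOD (p * q) ^ k] →
      intw (p * q) (Gw p q w₂) ≡ intw (p * q) (Gw p q w₁) + q ^ (t - 1)
        [MOD (p * q) ^ (k - 1)]) := by
  have hq0 : 0 < q := by omega
  obtain ⟨x₁, u₁, rfl⟩ : ∃ x u, w₁ = x :: u := by
    cases w₁ with
    | nil => simp at hw₁; omega
    | cons a l => exact ⟨a, l, rfl⟩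
  obtain ⟨x₂, u₂, rfl⟩ : ∃ x u, w₂ = x :: u := by
    cases w₂ with
    | nil => simp at hw₂; omega
    | cons a l => exact ⟨a, l, rfl⟩
  have hu₁ : u₁.length = k - 1 := by simp at hw₁; omega
  have hu₂ : u₂.length = k - 1 := by simp at hw₂; omega
  have key₁ := key p q hq0 x₁ u₁
  have key₂ := key p q hq0 x₂ u₂
  rw [hu₁] at key₁
  rw [hu₂] at key₂
  set n₁ := intw (p * q) (x₁ :: u₁) with hn₁
  set n₂ := intw (p * q) (x₂ :: u₂) with hn₂
  set m₁ := intw (p * q) (Gw p q (x₁ :: u₁)) with hm₁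
  set m₂ := intw (p * q) (Gw p q (x₂ :: u₂)) with hm₂
  have hqt : q ^ t = q ^ (t - 1) * q := by
    rw [← pow_succ]; congr 1; omega
  constructor
  · intro h
    have h1 : m₁ ≤ n₁ / q := by omega
    have h2 : n₁ / q < q ^ (t - 1) := by
      rw [Nat.div_lt_iff_lt_mul hq0, ← hqt]; exact h
    omega
  · intro h
    have hMk : (p * q) ^ k = q * (p * (p * q) ^ (k - 1)) := by
      have h' : (p * q) ^ k = (p * q) ^ (k - 1) * (p * q) := by
        rw [← pow_succ]; congr 1; omega
      rw [h']; ring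
    have hqdvd : q ∣ (p * q) ^ k :=
      dvd_pow (Dvd.intro_left p rfl) (by omega)
    have hmodq : n₂ % q = (n₁ + q ^ t) % q := h.of_dvd hqdvd
    have h2 : n₂ / q ≡ (n₁ + q ^ t) / q [MOD p * (p * q) ^ (k - 1)] := by
      apply div_modEq hq0 _ hmodq
      rwa [← hMk]
    have h3 : n₂ / q ≡ (n₁ + q ^ t) / q [MOD (p * q) ^ (k - 1)] :=
      h2.of_dvd (dvd_mul_left _ _)
    have h4 : (n₁ + q ^ t) / q = n₁ / q + q ^ (t - 1) := by
      rw [hqt, Nat.add_mul_div_right _ _ hq0]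
    have h5 : m₂ ≡ n₂ / q [MOD (p * q) ^ (k - 1)] := by
      rw [key₂]
      exact ((Nat.modEq_iff_dvd' (Nat.le_add_left _ _)).mpr
        (by rw [Nat.add_sub_cancel]; exact dvd_mul_left _ _))
    have h6 : n₁ / q ≡ m₁ [MOD (p * q) ^ (k - 1)] := by
      rw [key₁]
      exact ((Nat.modEq_iff_dvd' (Nat.le_add_left _ _)).mpr
        (by rw [Nat.add_sub_cancel]; exact dvd_mul_left _ _)).symm
    calc m₂ ≡ n₂ / q [MOD (p * q) ^ (k - 1)] := h5
      _ ≡ (n₁ + q ^ t) / q [MOD (p * q) ^ (k - 1)] := h3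
      _ = n₁ / q + q ^ (t - 1) := h4
      _ ≡ m₁ + q ^ (t - 1) [MOD (p * q) ^ (k - 1)] := h6.add_right _
end

section
/- Let p, q ≥ 2 be relatively prime integers and let c ∈ A_{pq}^ℤ be a configuration such that c(i) = 0 for all sufficiently small i. Then real_{pq}(F_{p,q}(c)) = (p/q) · real_{pq}(c). -/
/-- Applying `Gca` multiplies the represented real number by `p`. -/
lemma Gca_hasSum (p q : ℕ) (hq : 0 < q) (hx : (0:ℝ) < ((p * q : ℕ) : ℝ))
    (e : ℤ → ℕ) (S : ℝ)
    (hS : HasSum (fun i : ℤ => (e (-i) : ℝ) * ((p * q : ℕ) : ℝ) ^ i) S) :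
    HasSum (fun i : ℤ => (Gca p q e (-i) : ℝ) * ((p * q : ℕ) : ℝ) ^ i) ((p : ℝ) * S) := by
  set x : ℝ := ((p * q : ℕ) : ℝ) with hxdef
  have hne : x ≠ 0 := ne_of_gt hx
  set fmod : ℤ → ℝ := fun i => ((e (-i) % q : ℕ) : ℝ) * x ^ i with hfmod
  set fdiv : ℤ → ℝ := fun i => ((e (-i) / q : ℕ) : ℝ) * x ^ i with hfdiv
  have hnonneg : ∀ (a : ℕ) (i : ℤ), (0:ℝ) ≤ (a : ℝ) * x ^ i := fun a i =>
    mul_nonneg (Nat.cast_nonneg a) (le_of_lt (zpow_pos hx i))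
  have hmodsum : Summable fmod := by
    apply Summable.of_nonneg_of_le (fun i => hnonneg _ i)
      (fun i => ?_) hS.summable
    exact mul_le_mul_of_nonneg_right (by exact_mod_cast Nat.mod_le _ _)
      (le_of_lt (zpow_pos hx i))
  have hdivsum : Summable fdiv := by
    apply Summable.of_nonneg_of_le (fun i => hnonneg _ i)
      (fun i => ?_) hS.summable
    exact mul_le_mul_of_nonneg_right (by exact_mod_cast Nat.div_le_self _ _)
      (le_of_lt (zpow_pos hx i))
  set A : ℝ := ∑' i, fmod i with hA
  set B : ℝ := ∑' i, fdiv i with hB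
  have hAsum : HasSum fmod A := hmodsum.hasSum
  have hBsum : HasSum fdiv B := hdivsum.hasSum
  -- S = q * B + A
  have hcomb : HasSum (fun i : ℤ => (q : ℝ) * fdiv i + fmod i) ((q : ℝ) * B + A) :=
    (hBsum.mul_left _).add hAsum
  have hptwise : (fun i : ℤ => (q : ℝ) * fdiv i + fmod i)
      = fun i : ℤ => (e (-i) : ℝ) * x ^ i := by
    funext i
    have h := Nat.div_add_mod (e (-i)) q
    have h' : (q : ℝ) * ((e (-i) / q : ℕ) : ℝ) + ((e (-i) % q : ℕ) : ℝ) = (e (-i) : ℝ) := by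
      exact_mod_cast h
    simp only [hfmod, hfdiv]
    nlinarith [zpow_pos hx i]
  have hSval : S = (q : ℝ) * B + A := hS.unique (hptwise ▸ hcomb)
  -- shifted div sum
  have hshift : HasSum (fun i : ℤ => fdiv (i - 1)) B := by
    have := (Equiv.subRight (1 : ℤ)).hasSum_iff.mpr hBsum
    exact this
  have htarget : HasSum (fun i : ℤ => (p : ℝ) * fmod i + fdiv (i - 1) * x)
      ((p : ℝ) * A + B * x) := (hAsum.mul_left _).add (hshift.mul_right _)
  have heq : (fun i : ℤ => (p : ℝ) * fmod i + fdiv (i - 1) * x)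
      = fun i : ℤ => (Gca p q e (-i) : ℝ) * x ^ i := by
    funext i
    have hGe : Gca p q e (-i) = e (-i) % q * p + e (-(i - 1)) / q := by
      simp only [Gca, g]
      congr 2
      ring_nf
    rw [hGe]
    push_cast
    simp only [hfmod, hfdiv]
    have hzp : x ^ (i - 1) * x = x ^ i := by
      rw [zpow_sub₀ hne, zpow_one]
      field_simp
    have : ((e (-(i - 1)) / q : ℕ) : ℝ) * x ^ (i - 1) * x
        = ((e (-(i - 1)) / q : ℕ) : ℝ) * x ^ i := by
      rw [mul_assoc, hzp]
    rw [this]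
    ring
  have hfin : HasSum (fun i : ℤ => (Gca p q e (-i) : ℝ) * x ^ i)
      ((p : ℝ) * A + B * x) := heq ▸ htarget
  have hval : (p : ℝ) * A + B * x = (p : ℝ) * S := by
    have hxval : x = (p : ℝ) * (q : ℝ) := by push_cast [hxdef]; ring
    rw [hSval, hxval]; ring
  rwa [hval] at hfin

theorem stmt19 (p q : ℕ) (hp : 2 ≤ p) (hq : 2 ≤ q) (hpq : Nat.Coprime p q)
    (c : ℤ → ℕ) (hc : ∀ i, c i < p * q) (h0 : ∃ N : ℤ, ∀ i ≤ N, c i = 0) :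
    HasSum (fun i : ℤ => (Fca p q c (-i) : ℝ) * ((p * q : ℕ) : ℝ) ^ i)
      (((p : ℝ) / (q : ℝ)) * ∑' i : ℤ, (c (-i) : ℝ) * ((p * q : ℕ) : ℝ) ^ i) := by
  obtain ⟨N, hN⟩ := h0
  set x : ℝ := ((p * q : ℕ) : ℝ) with hxdef
  have hx1 : (1:ℝ) < x := by
    have : 4 ≤ p * q := le_trans (by norm_num) (Nat.mul_le_mul hp hq)
    have h4 : (4:ℝ) ≤ x := by rw [hxdef]; exact_mod_cast this
    linarith
  have hx : (0:ℝ) < x := lt_trans one_pos hx1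
  have hne : x ≠ 0 := ne_of_gt hx
  set f : ℤ → ℝ := fun i => (c (-i) : ℝ) * x ^ i with hf
  -- summability of the base series
  have hfsummable : Summable f := by
    set φ : ℕ → ℤ := fun n => -N - 1 - n with hφ
    have hinj : Function.Injective φ := by
      intro a b hab
      simp only [hφ, sub_right_inj] at hab
      exact_mod_cast hab
    have hzero : ∀ i : ℤ, i ∉ Set.range φ → f i = 0 := by
      intro i hi
      by_contra hne0
      have hci : c (-i) ≠ 0 := by
        intro h; apply hne0; simp [hf, h]
      have hgt : N < -i := by
        by_contra hle
        exact hci (hN _ (le_of_not_gt hle))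
      -- i ≤ -N - 1, so i is in the range of φ
      apply hi
      refine ⟨(-N - 1 - i).toNat, ?_⟩
      have h1 : i ≤ -N - 1 := by omega
      have h2 : (0:ℤ) ≤ -N - 1 - i := by omega
      simp only [hφ]
      omega
    rw [← hinj.summable_iff hzero]
    -- compare with geometric series
    have hgeo : Summable (fun n : ℕ => ((p*q : ℕ) : ℝ) * x ^ (-N - 1 : ℤ) * x⁻¹ ^ n) := by
      apply Summable.mul_left
      apply summable_geometric_of_lt_one (by positivity)
      rw [inv_lt_one_iff₀]; right; exact hx1
    apply Summable.of_nonneg_of_le (fun n => ?_) (fun n => ?_) hgeo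
    · exact mul_nonneg (Nat.cast_nonneg _) (le_of_lt (zpow_pos hx _))
    · show (c (-φ n) : ℝ) * x ^ (φ n) ≤ _
      have hsplit : x ^ (φ n) = x ^ (-N - 1 : ℤ) * x⁻¹ ^ n := by
        simp only [hφ]
        rw [zpow_sub₀ hne, zpow_natCast, inv_pow]
        rfl
      rw [hsplit, ← mul_assoc]
      apply mul_le_mul_of_nonneg_right _ (by positivity)
      apply mul_le_mul_of_nonneg_right _ (le_of_lt (zpow_pos hx _))
      exact_mod_cast le_of_lt (hc _)
  set S : ℝ := ∑' i, f i with hSdef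
  have hSsum : HasSum f S := hfsummable.hasSum
  have hq0 : 0 < q := lt_of_lt_of_le two_pos hq
  have hG1 := Gca_hasSum p q hq0 hx _ _ hSsum
  have hG2 := Gca_hasSum p q hq0 hx _ _ hG1
  -- hG2 : HasSum (fun i => (Gca p q (Gca p q c) (-i) : ℝ) * x ^ i) (p * (p * S))
  set F : ℤ → ℝ := fun i => (Gca p q (Gca p q c) (-i) : ℝ) * x ^ i with hF
  have hshift : HasSum (fun i : ℤ => F (i + 1)) ((p:ℝ) * ((p:ℝ) * S)) := by
    have := (Equiv.addRight (1 : ℤ)).hasSum_iff.mpr hG2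
    exact this
  have hfinal : HasSum (fun i : ℤ => F (i + 1) * x⁻¹) ((p:ℝ) * ((p:ℝ) * S) * x⁻¹) :=
    hshift.mul_right _
  have heq : (fun i : ℤ => F (i + 1) * x⁻¹)
      = fun i : ℤ => (Fca p q c (-i) : ℝ) * x ^ i := by
    funext i
    have hFca : Fca p q c (-i) = Gca p q (Gca p q c) (-(i + 1)) := by
      simp only [Fca]
      congr 1
      ring
    rw [hFca]
    simp only [hF, neg_neg]
    have hzp : x ^ (i + 1) * x⁻¹ = x ^ i := by
      rw [zpow_add_one₀ hne]
      field_simp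
    rw [mul_assoc, hzp]
  have hfin2 : HasSum (fun i : ℤ => (Fca p q c (-i) : ℝ) * x ^ i)
      ((p:ℝ) * ((p:ℝ) * S) * x⁻¹) := heq ▸ hfinal
  have hval : (p:ℝ) * ((p:ℝ) * S) * x⁻¹ = ((p:ℝ) / (q:ℝ)) * S := by
    have hxval : x = (p : ℝ) * (q : ℝ) := by rw [hxdef]; push_cast; ring
    have hp0 : (p:ℝ) ≠ 0 := by positivity
    have hq0' : (q:ℝ) ≠ 0 := by positivity
    rw [hxval]
    field_simp
  rwa [hval] at hfin2
end
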